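/- arXiv:2107.12694 — 2 statements merged into one kernel-verified Lean document; each statement's English description precedes it below -/
import Mathlib

section
/- Let λ > 1/2, T > 0, k ≥ e, and let μ, ν : [0, T] → [0, ∞) be continuous functions. Define ψ̆(x, m) := x·exp( m·(ln(1+x))^{2λ} ) for x, m ∈ [0, ∞), and φ(s, x) := (x+k)·exp( μ(s)·(ln(x+k))^{2λ} + ν(s) ). Then for all (s, x) ∈ [0, T] × [0, ∞): ψ̆(x, μ(s)) ≤ φ(s, x); and there exists a constant K > 0 such that for all (s, x) ∈ [0, T] × [0, ∞): φ(s, x) ≤ K·ψ̆(x, μ(s)) + K. -/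
/-- `ψ̆(x, m) = x·exp(m·(ln(1+x))^{2λ})` (the weight in the case `λ > 1/2`). -/
noncomputable def psiBreve (lam x m : ℝ) : ℝ :=
  x * Real.exp (m * Real.log (1 + x) ^ (2 * lam))

/-- Convexity (tangent-line) estimate: `b^p - a^p ≤ p·b^(p-1)·(b-a)` for `0 ≤ a ≤ b`, `1 ≤ p`. -/
lemma rpow_sub_rpow_le_aux {a b p : ℝ} (ha : 0 ≤ a) (hab : a ≤ b) (hb : 0 < b) (hp : 1 ≤ p) :
    b ^ p - a ^ p ≤ p * b ^ (p - 1) * (b - a) := by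
  have hs : (-1 : ℝ) ≤ a / b - 1 := by
    have : 0 ≤ a / b := div_nonneg ha hb.le
    linarith
  have hB := one_add_mul_self_le_rpow_one_add hs hp
  rw [add_sub_cancel] at hB
  rw [Real.div_rpow ha hb.le] at hB
  have hbp : 0 < b ^ p := Real.rpow_pos_of_pos hb p
  have h2 : (1 + p * (a / b - 1)) * b ^ p ≤ a ^ p := (le_div_iff₀ hbp).mp hB
  have hbp1 : b ^ p = b ^ (p - 1) * b := by
    rw [← Real.rpow_add_one hb.ne' (p - 1)]; ring_nf
  have e : (1 + p * (a / b - 1)) * b ^ p = b ^ p + p * b ^ (p - 1) * (a - b) := by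
    rw [hbp1]; field_simp
  rw [e] at h2
  linarith

set_option maxHeartbeats 1000000 in
/-- Proposition 6.3 upper/lower comparison between `φ` and `ψ̆`. -/
theorem stmt_15 (lam T k : ℝ) (hlam : 1 / 2 < lam) (hT : 0 < T)
    (hk : Real.exp 1 ≤ k)
    (μ ν : ℝ → ℝ)
    (hμc : ContinuousOn μ (Set.Icc 0 T)) (hμnn : ∀ s ∈ Set.Icc 0 T, 0 ≤ μ s)
    (hνc : ContinuousOn ν (Set.Icc 0 T)) (hνnn : ∀ s ∈ Set.Icc 0 T, 0 ≤ ν s)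
    (φ : ℝ → ℝ → ℝ)
    (hφ : ∀ s x, φ s x =
      (x + k) * Real.exp (μ s * Real.log (x + k) ^ (2 * lam) + ν s)) :
    (∀ s ∈ Set.Icc 0 T, ∀ x : ℝ, 0 ≤ x → psiBreve lam x (μ s) ≤ φ s x) ∧
    ∃ K : ℝ, 0 < K ∧ ∀ s ∈ Set.Icc 0 T, ∀ x : ℝ, 0 ≤ x →
      φ s x ≤ K * psiBreve lam x (μ s) + K := by
  have hk1 : (1 : ℝ) ≤ k := le_trans (Real.one_le_exp (by norm_num)) hk
  have hp1 : (1 : ℝ) ≤ 2 * lam := by linarith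
  constructor
  · -- lower bound
    intro s hs x hx
    rw [hφ s x, psiBreve]
    have ha : 0 ≤ Real.log (1 + x) := Real.log_nonneg (by linarith)
    have hab : Real.log (1 + x) ≤ Real.log (x + k) :=
      Real.log_le_log (by linarith) (by linarith)
    have hpow : Real.log (1 + x) ^ (2 * lam) ≤ Real.log (x + k) ^ (2 * lam) :=
      Real.rpow_le_rpow ha hab (by linarith)
    have hexp : Real.exp (μ s * Real.log (1 + x) ^ (2 * lam)) ≤
        Real.exp (μ s * Real.log (x + k) ^ (2 * lam) + ν s) := by
      apply Real.exp_le_exp.mpr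
      have hμ := hμnn s hs
      have hν := hνnn s hs
      nlinarith [mul_le_mul_of_nonneg_left hpow hμ]
    exact mul_le_mul (by linarith) hexp (Real.exp_pos _).le (by linarith)
  · -- upper bound
    set p : ℝ := 2 * lam with hpdef
    set q : ℝ := p - 1 with hqdef
    have hq : 0 < q := by simp only [hqdef, hpdef]; linarith
    obtain ⟨s₀, hs₀, hMmax⟩ :=
      isCompact_Icc.exists_isMaxOn (Set.nonempty_Icc.mpr hT.le) hμc
    obtain ⟨s₁, hs₁, hNmax⟩ :=
      isCompact_Icc.exists_isMaxOn (Set.nonempty_Icc.mpr hT.le) hνc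
    set M : ℝ := μ s₀ with hMdef
    set N : ℝ := ν s₁ with hNdef
    have hM0 : 0 ≤ M := hμnn s₀ hs₀
    have hN0 : 0 ≤ N := hνnn s₁ hs₁
    set C1 : ℝ := (2 * q) ^ q with hC1def
    have hC1 : 0 ≤ C1 := Real.rpow_nonneg (by linarith) q
    set D0 : ℝ := p * (C1 * (k ^ ((1 : ℝ) / 2) * (k - 1))) with hD0def
    have hk12 : 0 ≤ k ^ ((1 : ℝ) / 2) := Real.rpow_nonneg (by linarith) _
    have hD0 : 0 ≤ D0 := by
      apply mul_nonneg (by linarith)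
      exact mul_nonneg hC1 (mul_nonneg hk12 (by linarith))
    have hLk : 0 ≤ Real.log (1 + k) := Real.log_nonneg (by linarith)
    have hLkp : 0 ≤ Real.log (1 + k) ^ p := Real.rpow_nonneg hLk p
    refine ⟨(1 + k) * Real.exp (M * D0 + M * Real.log (1 + k) ^ p + N), by positivity,
      ?_⟩
    intro s hs x hx
    have hμ := hμnn s hs
    have hν := hνnn s hs
    have hμM : μ s ≤ M := hMmax hs
    have hνN : ν s ≤ N := hNmax hs
    set a : ℝ := Real.log (1 + x) with hadef
    set b : ℝ := Real.log (x + k) with hbdef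
    have hxk : (0 : ℝ) < x + k := by linarith
    have hx1 : (0 : ℝ) < 1 + x := by linarith
    have ha0 : 0 ≤ a := Real.log_nonneg (by linarith)
    have hab : a ≤ b := Real.log_le_log hx1 (by linarith)
    have hb1 : (1 : ℝ) ≤ b := by
      rw [hbdef, ← Real.log_exp 1]
      exact Real.log_le_log (Real.exp_pos 1) (by linarith)
    have hb0 : (0 : ℝ) < b := by linarith
    have hΔ0 : 0 ≤ b ^ p - a ^ p := by
      have := Real.rpow_le_rpow ha0 hab (by linarith : (0:ℝ) ≤ p)
      linarith
    -- b - a ≤ (k-1)/(1+x)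
    have hba : b - a ≤ (k - 1) / (1 + x) := by
      have h1 : b - a = Real.log ((x + k) / (1 + x)) := by
        rw [Real.log_div hxk.ne' hx1.ne']
      have h2 : Real.log ((x + k) / (1 + x)) ≤ (x + k) / (1 + x) - 1 :=
        Real.log_le_sub_one_of_pos (by positivity)
      have h3 : (x + k) / (1 + x) - 1 = (k - 1) / (1 + x) := by
        field_simp
        ring
      linarith [h1 ▸ (h3 ▸ h2)]
    -- b^q ≤ k^(1/2) * (1+x) * C1
    have hbq : b ^ q ≤ k ^ ((1 : ℝ) / 2) * (1 + x) * C1 := by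
      have hε : (0 : ℝ) < 1 / (2 * q) := by positivity
      have hlog : b ≤ (x + k) ^ (1 / (2 * q)) * (2 * q) := by
        have h := Real.log_le_rpow_div hxk.le hε
        calc b ≤ (x + k) ^ (1 / (2 * q)) / (1 / (2 * q)) := h
          _ = (x + k) ^ (1 / (2 * q)) * (2 * q) := by
              rw [div_div_eq_mul_div, div_one]
      have hstep : b ^ q ≤ ((x + k) ^ (1 / (2 * q)) * (2 * q)) ^ q :=
        Real.rpow_le_rpow hb0.le hlog hq.le
      have hmul : ((x + k) ^ (1 / (2 * q)) * (2 * q)) ^ q =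
          (x + k) ^ ((1 : ℝ) / 2) * C1 := by
        have he : (1 / (2 * q)) * q = 1 / 2 := by field_simp
        rw [Real.mul_rpow (Real.rpow_nonneg hxk.le _) (by linarith),
          ← Real.rpow_mul hxk.le, he]
      have hxk12 : (x + k) ^ ((1 : ℝ) / 2) ≤ k ^ ((1 : ℝ) / 2) * (1 + x) := by
        have h1 : x + k ≤ k * (1 + x) := by nlinarith
        have h2 : (x + k) ^ ((1 : ℝ) / 2) ≤ (k * (1 + x)) ^ ((1 : ℝ) / 2) :=
          Real.rpow_le_rpow hxk.le h1 (by norm_num)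
        have h3 : (k * (1 + x)) ^ ((1 : ℝ) / 2) =
            k ^ ((1 : ℝ) / 2) * (1 + x) ^ ((1 : ℝ) / 2) :=
          Real.mul_rpow (by linarith) hx1.le
        have h4 : (1 + x) ^ ((1 : ℝ) / 2) ≤ 1 + x := by
          nth_rewrite 2 [← Real.rpow_one (1 + x)]
          exact Real.rpow_le_rpow_of_exponent_le (by linarith) (by norm_num)
        calc (x + k) ^ ((1 : ℝ) / 2) ≤ k ^ ((1:ℝ)/2) * (1 + x) ^ ((1:ℝ)/2) := by
              rw [← h3]; exact h2
          _ ≤ k ^ ((1:ℝ)/2) * (1 + x) := by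
              exact mul_le_mul_of_nonneg_left h4 hk12
      calc b ^ q ≤ (x + k) ^ ((1 : ℝ) / 2) * C1 := by rw [← hmul]; exact hstep
        _ ≤ k ^ ((1 : ℝ) / 2) * (1 + x) * C1 :=
            mul_le_mul_of_nonneg_right hxk12 hC1
    -- main exponent estimate
    have hΔ : b ^ p - a ^ p ≤ D0 := by
      have h1 : b ^ p - a ^ p ≤ p * b ^ q * (b - a) :=
        rpow_sub_rpow_le_aux ha0 hab hb0 hp1
      have hbq0 : 0 ≤ b ^ q := Real.rpow_nonneg hb0.le q
      have h2 : b ^ q * (b - a) ≤ (k ^ ((1:ℝ)/2) * (1 + x) * C1) * ((k - 1) / (1 + x)) := by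
        apply mul_le_mul hbq hba (by linarith) (by positivity)
      have hc : (1 + x) * ((k - 1) / (1 + x)) = k - 1 := by
        field_simp
      have h3 : (k ^ ((1:ℝ)/2) * (1 + x) * C1) * ((k - 1) / (1 + x)) =
          C1 * (k ^ ((1:ℝ)/2) * (k - 1)) := by
        rw [show (k ^ ((1:ℝ)/2) * (1 + x) * C1) * ((k - 1) / (1 + x)) =
          (k ^ ((1:ℝ)/2) * C1) * ((1 + x) * ((k - 1) / (1 + x))) from by ring, hc]
        ring
      have h4 : b ^ q * (b - a) ≤ C1 * (k ^ ((1:ℝ)/2) * (k - 1)) := by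
        rw [← h3]; exact h2
      calc b ^ p - a ^ p ≤ p * (b ^ q * (b - a)) := by linarith [h1]
        _ ≤ p * (C1 * (k ^ ((1:ℝ)/2) * (k - 1))) :=
            mul_le_mul_of_nonneg_left h4 (by linarith)
        _ = D0 := rfl
    have hexpbound : μ s * b ^ p + ν s ≤ μ s * a ^ p + (M * D0 + N) := by
      have : μ s * (b ^ p - a ^ p) ≤ M * D0 := mul_le_mul hμM hΔ hΔ0 hM0
      nlinarith
    rw [hφ s x]
    rcases le_or_gt 1 x with hx1' | hx1'
    · -- x ≥ 1
      have hψ : (x + k) * Real.exp (μ s * b ^ p + ν s) ≤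
          (1 + k) * Real.exp (M * D0 + N) * (x * Real.exp (μ s * a ^ p)) := by
        have hE : Real.exp (μ s * b ^ p + ν s) ≤
            Real.exp (M * D0 + N) * Real.exp (μ s * a ^ p) := by
          rw [← Real.exp_add]
          exact Real.exp_le_exp.mpr (by linarith)
        calc (x + k) * Real.exp (μ s * b ^ p + ν s)
            ≤ ((1 + k) * x) * (Real.exp (M * D0 + N) * Real.exp (μ s * a ^ p)) := by
              apply mul_le_mul (by nlinarith) hE (Real.exp_pos _).le (by nlinarith)
          _ = (1 + k) * Real.exp (M * D0 + N) * (x * Real.exp (μ s * a ^ p)) := by ring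
      have hKle : (1 + k) * Real.exp (M * D0 + N) ≤
          (1 + k) * Real.exp (M * D0 + M * Real.log (1 + k) ^ p + N) := by
        apply mul_le_mul_of_nonneg_left _ (by linarith)
        exact Real.exp_le_exp.mpr (by nlinarith [mul_nonneg hM0 hLkp])
      have hψ0 : 0 ≤ x * Real.exp (μ s * a ^ p) :=
        mul_nonneg hx (Real.exp_pos _).le
      have hK0 : 0 ≤ (1 + k) * Real.exp (M * D0 + M * Real.log (1 + k) ^ p + N) := by
        positivity
      calc (x + k) * Real.exp (μ s * b ^ p + ν s)
          ≤ (1 + k) * Real.exp (M * D0 + N) * (x * Real.exp (μ s * a ^ p)) := hψ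
        _ ≤ (1 + k) * Real.exp (M * D0 + M * Real.log (1 + k) ^ p + N) *
              (x * Real.exp (μ s * a ^ p)) :=
            mul_le_mul_of_nonneg_right hKle hψ0
        _ = (1 + k) * Real.exp (M * D0 + M * Real.log (1 + k) ^ p + N) *
              psiBreve lam x (μ s) := by rw [psiBreve]
        _ ≤ (1 + k) * Real.exp (M * D0 + M * Real.log (1 + k) ^ p + N) *
              psiBreve lam x (μ s) +
            (1 + k) * Real.exp (M * D0 + M * Real.log (1 + k) ^ p + N) := by linarith
    · -- x < 1
      have hbk : b ≤ Real.log (1 + k) := Real.log_le_log hxk (by linarith)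
      have hbkp : b ^ p ≤ Real.log (1 + k) ^ p :=
        Real.rpow_le_rpow hb0.le hbk (by linarith)
      have hexp2 : μ s * b ^ p + ν s ≤ M * D0 + M * Real.log (1 + k) ^ p + N := by
        have h1 : μ s * b ^ p ≤ M * Real.log (1 + k) ^ p :=
          mul_le_mul hμM hbkp (Real.rpow_nonneg hb0.le p) hM0
        nlinarith [mul_nonneg hM0 hD0]
      have hφle : (x + k) * Real.exp (μ s * b ^ p + ν s) ≤
          (1 + k) * Real.exp (M * D0 + M * Real.log (1 + k) ^ p + N) := by
        apply mul_le_mul (by linarith) (Real.exp_le_exp.mpr hexp2)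
          (Real.exp_pos _).le (by linarith)
      have hψ0 : 0 ≤ psiBreve lam x (μ s) := by
        rw [psiBreve]; exact mul_nonneg hx (Real.exp_pos _).le
      nlinarith [mul_nonneg (by positivity :
        (0:ℝ) ≤ (1 + k) * Real.exp (M * D0 + M * Real.log (1 + k) ^ p + N)) hψ0]
end

section
/- There exists a universal constant K > 0 such that for all x, y > 0: 2·x·y·√(|ln y|) ≤ 2·x²·( |ln x| + K ) + (3/4)·y². -/
private lemma my_sqrt_add_le {a b : ℝ} (ha : 0 ≤ a) (hb : 0 ≤ b) :
    Real.sqrt (a + b) ≤ Real.sqrt a + Real.sqrt b := by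
  have h : a + b ≤ (Real.sqrt a + Real.sqrt b) ^ 2 := by
    have ha' := Real.sq_sqrt ha
    have hb' := Real.sq_sqrt hb
    nlinarith [mul_nonneg (Real.sqrt_nonneg a) (Real.sqrt_nonneg b)]
  calc Real.sqrt (a + b) ≤ Real.sqrt ((Real.sqrt a + Real.sqrt b) ^ 2) :=
        Real.sqrt_le_sqrt h
    _ = Real.sqrt a + Real.sqrt b := by
        rw [Real.sqrt_sq (by positivity)]

private lemma key_bound {t : ℝ} (ht : 0 < t) :
    2 * t * Real.sqrt |Real.log t| ≤ 1024 + t ^ 2 / 4 := by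
  rcases le_or_gt t 1 with h1 | h1
  · have hlog : Real.log t ≤ 0 := Real.log_nonpos ht.le h1
    have habs : |Real.log t| = -Real.log t := abs_of_nonpos hlog
    have hinv : 0 < t⁻¹ := by positivity
    have hle : -Real.log t ≤ t⁻¹ := by
      have h := Real.log_le_sub_one_of_pos hinv
      rw [Real.log_inv] at h
      linarith
    have hs : Real.sqrt |Real.log t| ≤ Real.sqrt t⁻¹ := by
      rw [habs]; exact Real.sqrt_le_sqrt hle
    have h2 : 2 * t * Real.sqrt t⁻¹ = 2 * Real.sqrt t := by
      rw [Real.sqrt_inv]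
      have hst : Real.sqrt t * Real.sqrt t = t := Real.mul_self_sqrt ht.le
      have hsp : (0:ℝ) < Real.sqrt t := Real.sqrt_pos.mpr ht
      field_simp
      nlinarith
    have h3 : Real.sqrt t ≤ 1 := by
      rw [show (1:ℝ) = Real.sqrt 1 by simp]
      exact Real.sqrt_le_sqrt h1
    nlinarith [Real.sqrt_nonneg t, sq_nonneg t]
  · have hlog : 0 ≤ Real.log t := Real.log_nonneg h1.le
    have habs : |Real.log t| = Real.log t := abs_of_nonneg hlog
    have hle : Real.log t ≤ t := by
      have := Real.log_le_sub_one_of_pos ht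
      linarith
    have hs : Real.sqrt |Real.log t| ≤ Real.sqrt t := by
      rw [habs]; exact Real.sqrt_le_sqrt hle
    set s := Real.sqrt t with hsdef
    have hst : s * s = t := Real.mul_self_sqrt ht.le
    have hs1 : 1 ≤ s := by
      rw [hsdef, show (1:ℝ) = Real.sqrt 1 by simp]
      exact Real.sqrt_le_sqrt h1.le
    have : 2 * t * s ≤ 1024 + t ^ 2 / 4 := by nlinarith [sq_nonneg (s * (s - 4)), sq_nonneg (s - 16), sq_nonneg s]
    nlinarith [mul_pos (mul_pos two_pos ht) (lt_of_lt_of_le one_pos hs1), ht]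

/-- Inequality (5.17): there is a universal constant `K > 0` such that for all `x, y > 0`,
`2·x·y·√(|ln y|) ≤ 2·x²·(|ln x| + K) + (3/4)·y²`. -/
theorem stmt_17 :
    ∃ K : ℝ, 0 < K ∧ ∀ x y : ℝ, 0 < x → 0 < y →
      2 * x * y * Real.sqrt |Real.log y| ≤
        2 * x ^ 2 * (|Real.log x| + K) + 3 / 4 * y ^ 2 := by
  refine ⟨512, by norm_num, fun x y hx hy => ?_⟩
  have hq : 0 < y / x := div_pos hy hx
  have hlogdiv : Real.log (y / x) = Real.log y - Real.log x :=
    Real.log_div hy.ne' hx.ne'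
  have htri : |Real.log y| ≤ |Real.log x| + |Real.log (y / x)| := by
    rw [hlogdiv]
    calc |Real.log y| = |Real.log x + (Real.log y - Real.log x)| := by ring_nf
      _ ≤ |Real.log x| + |Real.log y - Real.log x| := abs_add_le _ _
  have hsqrt : Real.sqrt |Real.log y| ≤
      Real.sqrt |Real.log x| + Real.sqrt |Real.log (y / x)| :=
    le_trans (Real.sqrt_le_sqrt htri) (my_sqrt_add_le (abs_nonneg _) (abs_nonneg _))
  have hxy : 0 < x * y := mul_pos hx hy
  have step : 2 * x * y * Real.sqrt |Real.log y| ≤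
      2 * x * y * Real.sqrt |Real.log x| + 2 * x * y * Real.sqrt |Real.log (y / x)| := by
    nlinarith [hsqrt, hxy]
  -- first term
  have hA : 2 * x * y * Real.sqrt |Real.log x| ≤ 2 * x ^ 2 * |Real.log x| + y ^ 2 / 2 := by
    have h := Real.sq_sqrt (abs_nonneg (Real.log x))
    nlinarith [sq_nonneg (2 * (x * Real.sqrt |Real.log x|) - y)]
  -- second term
  have hB : 2 * x * y * Real.sqrt |Real.log (y / x)| ≤ 2 * x ^ 2 * 512 + y ^ 2 / 4 := by
    have key := key_bound hq
    have hx2 : (0:ℝ) ≤ x ^ 2 := sq_nonneg x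
    have hmul := mul_le_mul_of_nonneg_left key hx2
    have heq : x ^ 2 * (2 * (y / x) * Real.sqrt |Real.log (y / x)|)
        = 2 * x * y * Real.sqrt |Real.log (y / x)| := by
      field_simp
    have heq2 : x ^ 2 * (1024 + (y / x) ^ 2 / 4) = 1024 * x ^ 2 + y ^ 2 / 4 := by
      field_simp
    rw [heq, heq2] at hmul
    linarith
  linarith [step, hA, hB]
end
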